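/- Let n, r be positive integers with gcd(r, n) = 1, and let c, d be integers. Set 𝒹₁ = gcd(c−d, n) and 𝒹₂ = gcd(c+(r−1)d, n). Then the number of x ∈ (ℤ/nℤ)^r with B·x = 0, where B is the r×r matrix with diagonal entries c and off-diagonal entries d, equals 𝒹₁^{r−1} · 𝒹₂. -/

import Mathlib

lemma key_card (n : ℕ) (hn : 0 < n) (a : ℤ) :
    Nat.card {z : ZMod n // (a : ZMod n) * z = 0} = Int.gcd a n := by
  haveI : NeZero n := ⟨hn.ne'⟩
  set f : ZMod n →+ ZMod n := AddMonoidHom.mulLeft ((a : ZMod n)) with hf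
  have hker : Nat.card {z : ZMod n // (a : ZMod n) * z = 0} = Nat.card f.ker := by
    apply Nat.card_congr
    exact Equiv.subtypeEquivRight (fun z => by simp [hf, AddMonoidHom.mem_ker])
  have hrange : Nat.card f.range = addOrderOf ((a : ZMod n)) := by
    rw [← Nat.card_zmultiples]
    apply Nat.card_congr
    apply Equiv.setCongr
    ext x
    simp only [AddMonoidHom.mem_range, AddSubgroup.mem_zmultiples_iff, hf]
    constructor
    · rintro ⟨z, rfl⟩
      obtain ⟨k, rfl⟩ := ZMod.intCast_surjective z
      exact ⟨k, by simp [zsmul_eq_mul, mul_comm]⟩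
    · rintro ⟨k, rfl⟩
      exact ⟨(k : ZMod n), by simp [zsmul_eq_mul, mul_comm]⟩
  have hord : addOrderOf ((a : ZMod n)) = n / n.gcd a.natAbs := by
    rcases Int.natAbs_eq a with h | h
    · conv_lhs => rw [h]
      rw [Int.cast_natCast]
      exact ZMod.addOrderOf_coe _ hn.ne'
    · conv_lhs => rw [h]
      rw [Int.cast_neg, Int.cast_natCast, addOrderOf_neg]
      exact ZMod.addOrderOf_coe _ hn.ne'
  have hidx := f.ker.index_mul_card
  rw [AddSubgroup.index_ker, Nat.card_zmod] at hidx
  rw [hrange, hord] at hidx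
  have hg : n.gcd a.natAbs ∣ n := Nat.gcd_dvd_left _ _
  have hgpos : 0 < n.gcd a.natAbs := Nat.gcd_pos_of_pos_left _ hn
  have hquot : n / (n / n.gcd a.natAbs) = n.gcd a.natAbs := Nat.div_div_self hg hn.ne'
  have hpos : 0 < n / n.gcd a.natAbs := Nat.div_pos (Nat.le_of_dvd hn hg) hgpos
  have hcard : Nat.card f.ker = n.gcd a.natAbs := by
    have h2 : n / n.gcd a.natAbs * n.gcd a.natAbs = n := Nat.div_mul_cancel hg
    exact Nat.eq_of_mul_eq_mul_left hpos (hidx.trans h2.symm)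
  rw [hker, hcard, Int.gcd]
  simp [Nat.gcd_comm]

theorem stmt_13 (n r : ℕ) (hn : 0 < n) (hr : 0 < r) (hco : Nat.gcd r n = 1) (c d : ℤ)
    (B : Matrix (Fin r) (Fin r) (ZMod n))
    (hB : ∀ i j, B i j = if i = j then (c : ZMod n) else (d : ZMod n)) :
    Nat.card {x : Fin r → ZMod n // B.mulVec x = 0}
      = (Int.gcd (c - d) n) ^ (r - 1) * Int.gcd (c + (r - 1) * d) n := by
  haveI : NeZero n := ⟨hn.ne'⟩
  obtain ⟨m, rfl⟩ := Nat.exists_eq_succ_of_ne_zero hr.ne'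
  set R : ℕ := m + 1 with hR
  set a : ZMod n := ((c - d : ℤ) : ZMod n) with ha
  set bz : ℤ := c + (((m + 1 : ℕ) : ℤ) - 1) * d with hbz
  have hb : (bz : ZMod n) = a + (R : ZMod n) * (d : ZMod n) := by
    rw [hbz, ha]; push_cast [hR]; ring
  -- mulVec formula
  have hmv : ∀ (x : Fin R → ZMod n) (i : Fin R),
      B.mulVec x i = a * x i + (d : ZMod n) * ∑ j, x j := by
    intro x i
    have hterm : ∀ j, B i j * x j = (if i = j then a * x j else 0) + (d : ZMod n) * x j := by
      intro j
      by_cases h : i = j <;> simp [hB, h, ha] <;> push_cast <;> ring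
    simp only [Matrix.mulVec, dotProduct]
    rw [Finset.sum_congr rfl (fun j _ => hterm j), Finset.sum_add_distrib,
      Finset.sum_ite_eq, if_pos (Finset.mem_univ i), ← Finset.mul_sum]
  have hcond : ∀ x : Fin R → ZMod n,
      B.mulVec x = 0 ↔ ∀ i, a * x i + (d : ZMod n) * ∑ j, x j = 0 := by
    intro x
    rw [funext_iff]
    simp [hmv]
    exact Iff.rfl
  -- unit r
  set u : (ZMod n)ˣ := ZMod.unitOfCoprime R hco with hudef
  have hu : (u : ZMod n) = (R : ZMod n) := rfl
  have cancel : ∀ z : ZMod n, (↑u⁻¹ : ZMod n) * ((u : ZMod n) * z) = z := fun z => by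
    rw [← mul_assoc, Units.inv_mul, one_mul]
  set t : (Fin m → ZMod n) → ZMod n → ZMod n :=
    fun y S => (↑u⁻¹ : ZMod n) * (S - ∑ i, y i) with ht
  set recon : (Fin m → ZMod n) → ZMod n → (Fin R → ZMod n) :=
    fun y S => Fin.snoc (fun i => y i + t y S) (t y S) with hrecon
  have hRt : ∀ y S, (R : ZMod n) * t y S = S - ∑ i, y i := by
    intro y S
    rw [ht, ← hu, ← mul_assoc, Units.mul_inv, one_mul]
  have hsumrecon : ∀ y S, ∑ j, recon y S j = ∑ i, y i + (R : ZMod n) * t y S := by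
    intro y S
    rw [Fin.sum_univ_castSucc]
    simp only [hrecon, Fin.snoc_castSucc, Fin.snoc_last]
    rw [Finset.sum_add_distrib, Finset.sum_const, Finset.card_univ, Fintype.card_fin,
      nsmul_eq_mul]
    push_cast [hR]
    ring
  have hSrecon : ∀ y S, ∑ j, recon y S j = S := by
    intro y S
    rw [hsumrecon, hRt]
    ring
  -- forward conditions
  have h1 : ∀ (x : Fin R → ZMod n), B.mulVec x = 0 →
      ∀ i : Fin m, a * (x i.castSucc - x (Fin.last m)) = 0 := by
    intro x hx i
    rw [hcond] at hx
    have e1 := hx i.castSucc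
    have e2 := hx (Fin.last m)
    have := sub_eq_zero_of_eq (e1.trans e2.symm)
    rw [add_sub_add_right_eq_sub, ← mul_sub] at this
    exact this
  have h2 : ∀ (x : Fin R → ZMod n), B.mulVec x = 0 → (bz : ZMod n) * (∑ j, x j) = 0 := by
    intro x hx
    rw [hcond] at hx
    have : ∑ i : Fin R, (a * x i + (d : ZMod n) * ∑ j, x j) = 0 := by
      rw [Finset.sum_congr rfl (fun i _ => hx i)]
      simp
    rw [Finset.sum_add_distrib, ← Finset.mul_sum, Finset.sum_const, Finset.card_univ,
      Fintype.card_fin, nsmul_eq_mul] at this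
    rw [hb, add_mul]
    calc a * (∑ j, x j) + (R : ZMod n) * (d : ZMod n) * (∑ j, x j)
        = a * ∑ i, x i + (R : ℕ) * ((d : ZMod n) * ∑ j, x j) := by push_cast; ring
      _ = 0 := this
  -- backward condition
  have h3 : ∀ (y : Fin m → ZMod n) (S : ZMod n), (∀ i, a * y i = 0) →
      (bz : ZMod n) * S = 0 → B.mulVec (recon y S) = 0 := by
    intro y S hy hS
    rw [hcond]
    have hsum : ∑ j, recon y S j = S := hSrecon y S
    have key : a * t y S + (d : ZMod n) * S = 0 := by
      have hRz : (R : ZMod n) * (a * t y S + (d : ZMod n) * S) = 0 := by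
        have hay : a * ∑ i, y i = 0 := by
          rw [Finset.mul_sum, Finset.sum_congr rfl (fun i _ => hy i)]
          simp
        calc (R : ZMod n) * (a * t y S + (d : ZMod n) * S)
            = a * ((R : ZMod n) * t y S) + (R : ZMod n) * (d : ZMod n) * S := by ring
          _ = a * (S - ∑ i, y i) + (R : ZMod n) * (d : ZMod n) * S := by rw [hRt]
          _ = (a + (R : ZMod n) * (d : ZMod n)) * S - a * ∑ i, y i := by ring
          _ = 0 := by rw [hay, ← hb, hS, sub_zero]
      calc a * t y S + (d : ZMod n) * S
          = (↑u⁻¹ : ZMod n) * ((u : ZMod n) * (a * t y S + (d : ZMod n) * S)) :=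
            (cancel _).symm
        _ = 0 := by rw [hu, hRz, mul_zero]
    intro j
    rw [hsum]
    refine Fin.lastCases ?_ ?_ j
    · simpa only [hrecon, Fin.snoc_last] using key
    · intro i
      simp only [hrecon, Fin.snoc_castSucc]
      rw [mul_add, hy i, zero_add]
      exact key
  have e : {x : Fin R → ZMod n // B.mulVec x = 0} ≃
      ({y : Fin m → ZMod n // ∀ i, a * y i = 0} × {S : ZMod n // (bz : ZMod n) * S = 0}) := by
    refine ⟨fun x => (⟨fun i => x.1 i.castSucc - x.1 (Fin.last m), h1 x.1 x.2⟩,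
        ⟨∑ j, x.1 j, h2 x.1 x.2⟩),
      fun p => ⟨recon p.1.1 p.2.1, h3 p.1.1 p.2.1 p.1.2 p.2.2⟩, ?_, ?_⟩
    · rintro ⟨x, hx⟩
      apply Subtype.ext
      have htv : t (fun i => x i.castSucc - x (Fin.last m)) (∑ j, x j) = x (Fin.last m) := by
        have hdiff : (∑ j, x j) - ∑ i : Fin m, (x i.castSucc - x (Fin.last m))
            = (R : ZMod n) * x (Fin.last m) := by
          rw [Fin.sum_univ_castSucc (f := x), Finset.sum_sub_distrib, Finset.sum_const,
            Finset.card_univ, Fintype.card_fin, nsmul_eq_mul]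
          push_cast [hR]
          ring
        show (↑u⁻¹ : ZMod n) * ((∑ j, x j) - ∑ i : Fin m, (x i.castSucc - x (Fin.last m)))
            = x (Fin.last m)
        rw [hdiff, ← hu]
        exact cancel _
      funext j
      refine Fin.lastCases ?_ ?_ j
      · simp only [hrecon, Fin.snoc_last]
        exact htv
      · intro i
        simp only [hrecon, Fin.snoc_castSucc, htv]
        ring
    · rintro ⟨⟨y, hy⟩, ⟨S, hS⟩⟩
      have hyv : ∀ i : Fin m, recon y S i.castSucc - recon y S (Fin.last m) = y i := by
        intro i
        simp only [hrecon, Fin.snoc_castSucc, Fin.snoc_last]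
        ring
      refine Prod.ext (Subtype.ext ?_) (Subtype.ext ?_)
      · funext i
        exact hyv i
      · exact hSrecon y S
  rw [Nat.card_congr e, Nat.card_prod]
  rw [Nat.card_congr (Equiv.subtypePiEquivPi
    (p := fun (_ : Fin m) (z : ZMod n) => a * z = 0)), Nat.card_pi]
  rw [ha, key_card n hn (c - d), key_card n hn bz]
  simp [hbz]
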